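/- arXiv:1910.13666 — 2 statements merged into one kernel-verified Lean document; each statement's English description precedes it below -/
import Mathlib

section
/- (Frobenius) Let $k$ be a field, $A \in M_n(k)$, and suppose $f_1 \mid f_2 \mid \cdots \mid f_m$ are nonzero monic polynomials in $k[x]$ (the invariant factors of $A$) such that $V_A$ is isomorphic as a $k[x]$-module to $\bigoplus_{i=1}^m k[x]/f_i k[x]$. Then $\dim_k C_{M_n(k)}(A) = \sum_{i=0}^{m-1} (2i+1) \deg f_{m-i}$. -/
open Polynomial Matrix

/-- The centralizer `C_{Mₙ(k)}(A) = {B : B * A = A * B}`, as a `k`-subspace of `Mₙ(k)`. -/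
def matrixCentralizer {k : Type*} [Field k] {n : ℕ} (A : Matrix (Fin n) (Fin n) k) :
    Submodule k (Matrix (Fin n) (Fin n) k) where
  carrier := {B : Matrix (Fin n) (Fin n) k | B * A = A * B}
  add_mem' hB hC := by simp only [Set.mem_setOf_eq] at *; rw [add_mul, mul_add, hB, hC]
  zero_mem' := by simp
  smul_mem' c B hB := by
    simp only [Set.mem_setOf_eq] at *
    rw [Matrix.smul_mul, Matrix.mul_smul, hB]

/-! ### Auxiliary lemmas -/

lemma LinearMap.ofAEval_apply {R M N : Type*} [CommSemiring R] [AddCommMonoid M] [Module R M]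
    (a : M →ₗ[R] M) [AddCommMonoid N] [Module R N] [Module R[X] N] [IsScalarTower R R[X] N]
    (f : M →ₗ[R] N) (hf) (x : Module.AEval' a) :
    (LinearMap.ofAEval a f hf) x = f ((Module.AEval'.of a).symm x) := rfl

section CentralizerEquiv

variable {k : Type*} [Field k] {n : ℕ} (A : Matrix (Fin n) (Fin n) k)

/-- The centralizer of `A` is `k`-linearly equivalent to the `k[X]`-endomorphisms of `V_A`. -/
noncomputable def centralizerEquivEnd :
    matrixCentralizer A ≃ₗ[k]
      (Module.AEval' (Matrix.toLin' A) →ₗ[k[X]] Module.AEval' (Matrix.toLin' A)) where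
  toFun B := LinearMap.ofAEval (Matrix.toLin' A)
    ((Module.AEval'.of (Matrix.toLin' A)).toLinearMap ∘ₗ Matrix.toLin' B.1)
    (fun m => by
      have hB : B.1 * A = A * B.1 := B.2
      have hBA : Matrix.toLin' B.1 ∘ₗ Matrix.toLin' A
          = Matrix.toLin' A ∘ₗ Matrix.toLin' B.1 := by
        rw [← Matrix.toLin'_mul, ← Matrix.toLin'_mul, hB]
      show Module.AEval'.of _ (Matrix.toLin' B.1 (Matrix.toLin' A • m))
        = X • Module.AEval'.of _ (Matrix.toLin' B.1 m)
      rw [Module.AEval'.X_smul_of, Module.End.smul_def]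
      exact congrArg _ (LinearMap.congr_fun hBA m)
    )
  map_add' B C := by
    refine LinearMap.ext fun x => ?_
    simp only [LinearMap.ofAEval_apply, LinearMap.add_apply, LinearMap.comp_apply,
      LinearEquiv.coe_toLinearMap, Submodule.coe_add, map_add]
  map_smul' c B := by
    refine LinearMap.ext fun x => ?_
    simp only [LinearMap.ofAEval_apply, LinearMap.smul_apply, LinearMap.comp_apply,
      LinearEquiv.coe_toLinearMap, SetLike.val_smul, _root_.map_smul, LinearMap.smul_apply,
      RingHom.id_apply]
  invFun g := ⟨LinearMap.toMatrix'
      ((Module.AEval'.of (Matrix.toLin' A)).symm.toLinearMap ∘ₗ (g.restrictScalars k)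
        ∘ₗ (Module.AEval'.of (Matrix.toLin' A)).toLinearMap), by
    have key : ((Module.AEval'.of (Matrix.toLin' A)).symm.toLinearMap ∘ₗ (g.restrictScalars k)
        ∘ₗ (Module.AEval'.of (Matrix.toLin' A)).toLinearMap) ∘ₗ Matrix.toLin' A
        = Matrix.toLin' A ∘ₗ ((Module.AEval'.of (Matrix.toLin' A)).symm.toLinearMap
          ∘ₗ (g.restrictScalars k) ∘ₗ (Module.AEval'.of (Matrix.toLin' A)).toLinearMap) := by
      refine LinearMap.ext fun m => ?_
      show (Module.AEval'.of (Matrix.toLin' A)).symm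
          (g (Module.AEval'.of (Matrix.toLin' A) (Matrix.toLin' A m)))
        = Matrix.toLin' A ((Module.AEval'.of (Matrix.toLin' A)).symm
          (g (Module.AEval'.of (Matrix.toLin' A) m)))
      rw [← Module.AEval'.X_smul_of, LinearMap.map_smul, Module.AEval'.of_symm_X_smul]
    have h1 := LinearMap.toMatrix'_comp ((Module.AEval'.of (Matrix.toLin' A)).symm.toLinearMap
      ∘ₗ (g.restrictScalars k) ∘ₗ (Module.AEval'.of (Matrix.toLin' A)).toLinearMap)
      (Matrix.toLin' A)
    have h2 := LinearMap.toMatrix'_comp (Matrix.toLin' A)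
      ((Module.AEval'.of (Matrix.toLin' A)).symm.toLinearMap
      ∘ₗ (g.restrictScalars k) ∘ₗ (Module.AEval'.of (Matrix.toLin' A)).toLinearMap)
    rw [LinearMap.toMatrix'_toLin'] at h1 h2
    show _ * A = A * _
    rw [← h1, ← h2, key]⟩
  left_inv B := by
    apply Subtype.ext
    apply Matrix.toLin'.injective
    rw [Matrix.toLin'_toMatrix']
    exact LinearMap.ext fun m => rfl
  right_inv g := by
    refine LinearMap.ext fun x => ?_
    rw [LinearMap.ofAEval_apply]
    simp only [LinearMap.comp_apply, LinearEquiv.coe_toLinearMap, Matrix.toLin'_toMatrix',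
      LinearMap.restrictScalars_apply, LinearEquiv.apply_symm_apply]

end CentralizerEquiv

section HomQuot

variable {k : Type*} [Field k]

/-- Multiplication-by-`a*c` map between polynomial quotient modules. -/
noncomputable def mulHomQuot (fa fb a c : k[X])
    (h : ∀ b ∈ Ideal.span {fa}, a * c * b ∈ Ideal.span {fb}) :
    (k[X] ⧸ Ideal.span {fa}) →ₗ[k[X]] k[X] ⧸ Ideal.span {fb} :=
  Submodule.liftQ _ ((Ideal.span {fb}).mkQ ∘ₗ LinearMap.toSpanSingleton k[X] k[X] (a * c))
    (by intro b hb
        simp only [LinearMap.mem_ker, LinearMap.comp_apply, LinearMap.toSpanSingleton_apply,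
          Submodule.mkQ_apply, Submodule.Quotient.mk_eq_zero]
        rw [smul_eq_mul, mul_comm]
        exact h b hb)

lemma mulHomQuot_mk (fa fb a c : k[X]) (h) (b : k[X]) :
    mulHomQuot fa fb a c h (Submodule.Quotient.mk b) = Submodule.Quotient.mk (b * (a * c)) := rfl

/-- `a ↦ (b ↦ a c b)` as a `k[X]`-linear map into the hom space. -/
noncomputable def thetaQuot (d f' c : k[X]) :
    k[X] →ₗ[k[X]] ((k[X] ⧸ Ideal.span {d * f'}) →ₗ[k[X]] k[X] ⧸ Ideal.span {d * c}) where
  toFun a := mulHomQuot (d * f') (d * c) a c (by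
    intro b hb
    obtain ⟨t, ht⟩ := Ideal.mem_span_singleton.1 hb
    exact Ideal.mem_span_singleton.2 ⟨a * f' * t, by rw [ht]; ring⟩)
  map_add' a a' := by
    refine LinearMap.ext fun x => ?_
    obtain ⟨b, rfl⟩ := Submodule.Quotient.mk_surjective _ x
    simp only [mulHomQuot_mk, LinearMap.add_apply]
    rw [← Submodule.Quotient.mk_add]
    congr 1; ring
  map_smul' p a := by
    refine LinearMap.ext fun x => ?_
    obtain ⟨b, rfl⟩ := Submodule.Quotient.mk_surjective _ x
    simp only [mulHomQuot_mk, LinearMap.smul_apply, RingHom.id_apply]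
    rw [← Submodule.Quotient.mk_smul]
    congr 1; simp [smul_eq_mul]; ring

lemma thetaQuot_mk (d f' c a b : k[X]) :
    thetaQuot d f' c a (Submodule.Quotient.mk b) = Submodule.Quotient.mk (b * (a * c)) := rfl

/-- The induced equivalence `k[X]/(d) ≃ Hom(k[X]/(d f'), k[X]/(d c))` when `f'` and `c`
are coprime. -/
noncomputable def homQuotEquiv (d f' c : k[X]) (hd : d ≠ 0) (hc : c ≠ 0)
    (hcop : IsCoprime f' c) :
    (k[X] ⧸ Ideal.span {d}) ≃ₗ[k[X]]
      ((k[X] ⧸ Ideal.span {d * f'}) →ₗ[k[X]] k[X] ⧸ Ideal.span {d * c}) := by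
  refine LinearEquiv.ofBijective
    (Submodule.liftQ (Ideal.span {d}) (thetaQuot d f' c) ?_) ⟨?_, ?_⟩
  · rw [Ideal.span_singleton_le_iff_mem]
    refine LinearMap.mem_ker.2 (LinearMap.ext fun x => ?_)
    obtain ⟨b, rfl⟩ := Submodule.Quotient.mk_surjective _ x
    rw [thetaQuot_mk]
    simp only [LinearMap.zero_apply, Submodule.Quotient.mk_eq_zero]
    exact Ideal.mem_span_singleton.2 ⟨b, by ring⟩
  · rw [← LinearMap.ker_eq_bot, LinearMap.ker_eq_bot']
    intro x hx
    obtain ⟨a, rfl⟩ := Submodule.Quotient.mk_surjective _ x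
    rw [Submodule.liftQ_apply] at hx
    have h1 : thetaQuot d f' c a (Submodule.Quotient.mk 1) = 0 := by rw [hx]; rfl
    rw [thetaQuot_mk, Submodule.Quotient.mk_eq_zero, Ideal.mem_span_singleton] at h1
    rw [Submodule.Quotient.mk_eq_zero, Ideal.mem_span_singleton]
    have : d * c ∣ a * c := by simpa [one_mul] using h1
    exact (mul_dvd_mul_iff_right hc).1 this
  · intro φ
    obtain ⟨y, hy⟩ := Submodule.Quotient.mk_surjective _ (φ (Submodule.Quotient.mk 1))
    have hkill : (d * f') • φ (Submodule.Quotient.mk (1 : k[X])) = 0 := by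
      rw [← _root_.map_smul, ← Submodule.Quotient.mk_smul,
        (Submodule.Quotient.mk_eq_zero _).2 (Ideal.mem_span_singleton.2 ⟨1, by simp [smul_eq_mul]⟩),
        map_zero]
    rw [← hy, ← Submodule.Quotient.mk_smul, Submodule.Quotient.mk_eq_zero,
      Ideal.mem_span_singleton] at hkill
    have hcy : c ∣ y := by
      have : c ∣ f' * y := by
        have h2 : d * c ∣ d * (f' * y) := by
          simpa [smul_eq_mul, mul_assoc] using hkill
        exact (mul_dvd_mul_iff_left hd).1 h2
      exact (hcop.symm.dvd_of_dvd_mul_left this)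
    obtain ⟨a, ha⟩ := hcy
    refine ⟨Submodule.Quotient.mk a, ?_⟩
    rw [Submodule.liftQ_apply]
    refine LinearMap.ext fun x => ?_
    obtain ⟨b, rfl⟩ := Submodule.Quotient.mk_surjective _ x
    rw [thetaQuot_mk]
    have : φ (Submodule.Quotient.mk b) = b • φ (Submodule.Quotient.mk 1) := by
      rw [← _root_.map_smul, ← Submodule.Quotient.mk_smul]; simp [smul_eq_mul]
    rw [this, ← hy, ← Submodule.Quotient.mk_smul]
    congr 1
    rw [smul_eq_mul, ha]; ring

lemma finiteDimensional_hom_quot (d f' c : k[X]) {fa fb : k[X]} (hd : d ≠ 0) (hc : c ≠ 0)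
    (hcop : IsCoprime f' c) (hfa : fa = d * f') (hfb : fb = d * c) :
    FiniteDimensional k ((k[X] ⧸ Ideal.span {fa}) →ₗ[k[X]] k[X] ⧸ Ideal.span {fb}) := by
  subst hfa hfb
  haveI : FiniteDimensional k (k[X] ⧸ Ideal.span {d}) := (AdjoinRoot.powerBasis hd).finite
  exact Module.Finite.equiv ((homQuotEquiv d f' c hd hc hcop).restrictScalars k)

lemma finrank_hom_quot (d f' c : k[X]) {fa fb : k[X]} (hd : d ≠ 0) (hc : c ≠ 0)
    (hcop : IsCoprime f' c) (hfa : fa = d * f') (hfb : fb = d * c) :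
    Module.finrank k ((k[X] ⧸ Ideal.span {fa}) →ₗ[k[X]] k[X] ⧸ Ideal.span {fb})
      = d.natDegree := by
  subst hfa hfb
  rw [← ((homQuotEquiv d f' c hd hc hcop).restrictScalars k).finrank_eq]
  exact (AdjoinRoot.powerBasis hd).finrank

end HomQuot

/-- Postcomposition with the projections gives an equivalence between maps into a product
and products of maps. -/
def homPiEquiv {R : Type*} [CommSemiring R] (S : Type*) [Semiring S] (M : Type*) [AddCommMonoid M]
    [Module R M] {ι : Type*} (N : ι → Type*) [∀ i, AddCommMonoid (N i)] [∀ i, Module R (N i)]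
    [∀ i, Module S (N i)] [∀ i, SMulCommClass R S (N i)] :
    (M →ₗ[R] ∀ i, N i) ≃ₗ[S] ∀ i, (M →ₗ[R] N i) where
  toFun g i := LinearMap.proj i ∘ₗ g
  invFun h := LinearMap.pi h
  map_add' g g' := rfl
  map_smul' c g := rfl
  left_inv g := rfl
  right_inv h := rfl

lemma sum_min_eq (m : ℕ) (g : ℕ → ℕ) :
    ∑ i ∈ Finset.range m, ∑ j ∈ Finset.range m, g (min i j)
      = ∑ i ∈ Finset.range m, (2 * i + 1) * g (m - 1 - i) := by
  induction m with
  | zero => simp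
  | succ m ih =>
    have inner : ∀ i ∈ Finset.range m, ∑ j ∈ Finset.range (m + 1), g (min i j)
        = (∑ j ∈ Finset.range m, g (min i j)) + g i := by
      intro i hi
      rw [Finset.sum_range_succ, min_eq_left (Nat.le_of_lt_succ
        (Nat.lt_succ_of_lt (Finset.mem_range.1 hi)))]
    have innerm : ∑ j ∈ Finset.range (m + 1), g (min m j)
        = (∑ j ∈ Finset.range m, g j) + g m := by
      rw [Finset.sum_range_succ, min_self]
      congr 1
      exact Finset.sum_congr rfl fun j hj =>
        by rw [min_eq_right (Nat.le_of_lt (Finset.mem_range.1 hj))]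
    rw [Finset.sum_range_succ, innerm, Finset.sum_congr rfl inner,
      Finset.sum_add_distrib, ih]
    simp only [Nat.add_sub_cancel]
    rw [Finset.sum_range_succ' (fun i => (2 * i + 1) * g (m - i))]
    simp only [Nat.sub_zero, mul_one, Nat.mul_zero, Nat.zero_add, one_mul]
    have reflect : ∑ i ∈ Finset.range m, g (m - 1 - i) = ∑ i ∈ Finset.range m, g i :=
      Finset.sum_range_reflect g m
    have : ∀ i, (2 * (i + 1) + 1) * g (m - (i + 1)) = (2 * i + 1) * g (m - 1 - i)
        + 2 * g (m - 1 - i) := by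
      intro i
      have : m - (i + 1) = m - 1 - i := by omega
      rw [this]; ring
    rw [Finset.sum_congr rfl fun i _ => this i, Finset.sum_add_distrib, ← Finset.mul_sum,
      reflect]
    ring

set_option maxHeartbeats 2000000 in
set_option synthInstance.maxHeartbeats 1000000 in
/-- **Frobenius.** If the invariant factors of `A` are the nonzero monic
polynomials `f 0 ∣ f 1 ∣ ⋯ ∣ f (m-1)`, i.e. `V_A ≅ ⨁ᵢ k[x]/fᵢ k[x]`, then the `k`-dimension
of the centralizer of `A` is `∑_{i=0}^{m-1} (2i+1) · deg f_{m-i}` (here `f i.rev = f_{m-i}`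
in one-based indexing). -/
theorem finrank_centralizer_eq_sum_odd_mul_deg {k : Type*} [Field k] {n m : ℕ}
    (A : Matrix (Fin n) (Fin n) k) (f : Fin m → k[X])
    (hmonic : ∀ i, (f i).Monic) (hne : ∀ i, f i ≠ 0)
    (hdvd : ∀ i j : Fin m, i ≤ j → f i ∣ f j)
    (hiso : Nonempty (Module.AEval' (Matrix.toLin' A) ≃ₗ[k[X]]
      (∀ i : Fin m, k[X] ⧸ Ideal.span {f i}))) :
    Module.finrank k (matrixCentralizer A) =
      ∑ i : Fin m, (2 * (i : ℕ) + 1) * (f i.rev).natDegree := by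
  classical
  obtain ⟨e⟩ := hiso
  -- dimension of each Hom space
  have key : ∀ i j : Fin m,
      Module.finrank k ((k[X] ⧸ Ideal.span {f i}) →ₗ[k[X]] k[X] ⧸ Ideal.span {f j})
        = (f (min i j)).natDegree ∧
      FiniteDimensional k ((k[X] ⧸ Ideal.span {f i}) →ₗ[k[X]] k[X] ⧸ Ideal.span {f j}) := by
    intro i j
    rcases le_total i j with h | h
    · obtain ⟨c, hc⟩ := hdvd i j h
      have hc0 : c ≠ 0 := by
        intro h0; exact hne j (by rw [hc, h0, mul_zero])
      refine ⟨?_, ?_⟩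
      · rw [min_eq_left h]
        exact finrank_hom_quot (f i) 1 c (hne i) hc0 (isCoprime_one_left)
          (by rw [mul_one]) hc
      · exact finiteDimensional_hom_quot (f i) 1 c (hne i) hc0 (isCoprime_one_left)
          (by rw [mul_one]) hc
    · obtain ⟨c, hc⟩ := hdvd j i h
      refine ⟨?_, ?_⟩
      · rw [min_eq_right h]
        exact finrank_hom_quot (f j) c 1 (hne j) one_ne_zero (isCoprime_one_right)
          hc (by rw [mul_one])
      · exact finiteDimensional_hom_quot (f j) c 1 (hne j) one_ne_zero (isCoprime_one_right)
          hc (by rw [mul_one])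
  haveI hfd : ∀ i j : Fin m,
      FiniteDimensional k ((k[X] ⧸ Ideal.span {f i}) →ₗ[k[X]] k[X] ⧸ Ideal.span {f j}) :=
    fun i j => (key i j).2
  haveI hfree : ∀ i j : Fin m,
      Module.Free k ((k[X] ⧸ Ideal.span {f i}) →ₗ[k[X]] k[X] ⧸ Ideal.span {f j}) :=
    fun i j => Module.Free.of_divisionRing k _
  haveI hfree' : ∀ i : Fin m,
      Module.Free k (∀ j : Fin m, (k[X] ⧸ Ideal.span {f i}) →ₗ[k[X]] k[X] ⧸ Ideal.span {f j}) :=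
    fun i => inferInstance
  -- chain of equivalences
  have sums : ∀ i : Fin m,
      Module.finrank k (∀ j : Fin m, (k[X] ⧸ Ideal.span {f i}) →ₗ[k[X]] k[X] ⧸ Ideal.span {f j})
        = ∑ j : Fin m, (f (min i j)).natDegree := by
    intro i
    rw [Module.finrank_pi_fintype k]
    exact Finset.sum_congr rfl fun j _ => (key i j).1
  have main : Module.finrank k (matrixCentralizer A)
      = ∑ i : Fin m, ∑ j : Fin m, (f (min i j)).natDegree := by
    calc Module.finrank k (matrixCentralizer A)
        = Module.finrank k
            (Module.AEval' (Matrix.toLin' A) →ₗ[k[X]] Module.AEval' (Matrix.toLin' A)) :=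
          (centralizerEquivEnd A).finrank_eq
      _ = Module.finrank k ((∀ i : Fin m, k[X] ⧸ Ideal.span {f i}) →ₗ[k[X]]
            ∀ i : Fin m, k[X] ⧸ Ideal.span {f i}) :=
          ((e.arrowCongr e).restrictScalars k).finrank_eq
      _ = Module.finrank k (∀ i : Fin m, (k[X] ⧸ Ideal.span {f i}) →ₗ[k[X]]
            ∀ j : Fin m, k[X] ⧸ Ideal.span {f j}) :=
          (((LinearMap.lsum k[X] (fun i : Fin m => k[X] ⧸ Ideal.span {f i}) k).symm).finrank_eq).symm.symm
      _ = Module.finrank k (∀ i : Fin m, ∀ j : Fin m,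
            (k[X] ⧸ Ideal.span {f i}) →ₗ[k[X]] k[X] ⧸ Ideal.span {f j}) :=
          (LinearEquiv.piCongrRight fun i : Fin m =>
            homPiEquiv k (k[X] ⧸ Ideal.span {f i})
              (fun j : Fin m => k[X] ⧸ Ideal.span {f j})).finrank_eq
      _ = ∑ i : Fin m, Module.finrank k (∀ j : Fin m,
            (k[X] ⧸ Ideal.span {f i}) →ₗ[k[X]] k[X] ⧸ Ideal.span {f j}) :=
          Module.finrank_pi_fintype k
      _ = ∑ i : Fin m, ∑ j : Fin m, (f (min i j)).natDegree :=
          Finset.sum_congr rfl fun i _ => sums i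
  rw [main]
  -- now the combinatorial identity
  set g : ℕ → ℕ := fun t => if h : t < m then (f ⟨t, h⟩).natDegree else 0 with hg
  have hmin : ∀ i j : Fin m, (f (min i j)).natDegree = g (min (i : ℕ) (j : ℕ)) := by
    intro i j
    rcases le_total i j with h | h
    · rw [min_eq_left h, min_eq_left (show (i : ℕ) ≤ j from h), hg]
      simp [i.isLt]
    · rw [min_eq_right h, min_eq_right (show (j : ℕ) ≤ i from h), hg]
      simp [j.isLt]
  calc ∑ i : Fin m, ∑ j : Fin m, (f (min i j)).natDegree
      = ∑ i ∈ Finset.range m, ∑ j ∈ Finset.range m, g (min i j) := by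
        rw [← Fin.sum_univ_eq_sum_range (fun t => ∑ j ∈ Finset.range m, g (min t j)) m]
        refine Finset.sum_congr rfl fun i _ => ?_
        rw [← Fin.sum_univ_eq_sum_range (fun t => g (min (i : ℕ) t)) m]
        exact Finset.sum_congr rfl fun j _ => hmin i j
    _ = ∑ i ∈ Finset.range m, (2 * i + 1) * g (m - 1 - i) := sum_min_eq m g
    _ = ∑ i : Fin m, (2 * (i : ℕ) + 1) * (f i.rev).natDegree := by
        rw [← Fin.sum_univ_eq_sum_range (fun t => (2 * t + 1) * g (m - 1 - t)) m]
        refine Finset.sum_congr rfl fun i _ => ?_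
        congr 1
        have h1 : m - 1 - (i : ℕ) < m := by omega
        rw [hg]
        simp only [h1, dif_pos]
        congr 1
        congr 1
        apply Fin.ext
        simp only [Fin.val_rev]
        omega
end

section
/- Let $k$ be a field and $f_1 \mid f_2 \mid \cdots \mid f_m$ be nonzero monic polynomials in $k[x]$ with $\deg f_i = n_i \ge 1$, $n = n_1 + \cdots + n_m$, and let $A = C(f_1) \oplus \cdots \oplus C(f_m) \in M_n(k)$ be the block diagonal matrix of companion matrices. For $i > j$ let $q_{ij} \in k^{n_i}$ be the coefficient vector of $f_i / f_j$ (padded with zeros), and for $i \le j$ let $q_{ij} = e_1 \in k^{n_i}$; let $Q_{ij} \in M_{n_i, n_j}(k)$ be the matrix whose $t$-th column is $C(f_i)^{t-1} q_{ij}$ for $t = 1, \ldots, n_j$. Then a matrix $B \in M_n(k)$ commutes with $A$ if and only if, writing $B$ in blocks $B_{ij} \in M_{n_i, n_j}(k)$ conforming with the block structure of $A$, for every pair $(i,j)$ there exists $\lambda_{ij} \in k[x]$ such that $B_{ij} = \lambda_{ij}(C(f_i)) \, Q_{ij}$. -/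
open Polynomial Matrix

/-- The companion matrix of a (monic, degree `n`) polynomial `f = xⁿ + c_{n-1}x^{n-1} + ⋯ + c₀`. -/
def companionMatrix {k : Type*} [Field k] (n : ℕ) (f : k[X]) : Matrix (Fin n) (Fin n) k :=
  Matrix.of fun i j =>
    if (j : ℕ) + 1 = n then -f.coeff i
    else if (i : ℕ) = (j : ℕ) + 1 then 1 else 0

section Aux
variable {k : Type*} [Field k]

/-- Coefficient-vector of `p %ₘ g`, as a linear map. -/
noncomputable def psiFun (n : ℕ) (g : k[X]) : k[X] →ₗ[k] (Fin n → k) where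
  toFun p := fun l => (p %ₘ g).coeff l
  map_add' p q := by funext l; simp [Polynomial.add_modByMonic]
  map_smul' c p := by funext l; simp [Polynomial.smul_modByMonic]

lemma psiFun_apply (n : ℕ) (g p : k[X]) (l : Fin n) : psiFun n g p l = (p %ₘ g).coeff l := rfl

variable {g : k[X]}

lemma psi_of_lt (hg : g.Monic) {p : k[X]} (hp : p.natDegree < g.natDegree) :
    psiFun g.natDegree g p = fun l : Fin g.natDegree => p.coeff (l : ℕ) := by
  have : p %ₘ g = p := by
    rw [Polynomial.modByMonic_eq_self_iff hg]
    calc p.degree ≤ p.natDegree := degree_le_natDegree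
    _ < (g.natDegree : WithBot ℕ) := by exact_mod_cast hp
    _ = g.degree := (degree_eq_natDegree (hg.ne_zero)).symm
  funext l; rw [psiFun_apply, this]

lemma psi_eq_zero_iff (hg : g.Monic) {p : k[X]} : psiFun g.natDegree g p = 0 ↔ g ∣ p := by
  rw [← Polynomial.modByMonic_eq_zero_iff_dvd hg]
  constructor
  · intro h
    ext m
    by_cases hm : m < g.natDegree
    · exact congrFun h ⟨m, hm⟩
    · refine Polynomial.coeff_eq_zero_of_degree_lt ?_
      calc (p %ₘ g).degree < g.degree := degree_modByMonic_lt p hg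
      _ = (g.natDegree : WithBot ℕ) := degree_eq_natDegree hg.ne_zero
      _ ≤ m := by exact_mod_cast Nat.le_of_not_lt hm
  · intro h; funext l; rw [psiFun_apply, h]; simp

lemma psi_congr (hg : g.Monic) {p p' : k[X]} (hd : g ∣ p - p') :
    psiFun g.natDegree g p = psiFun g.natDegree g p' := by
  have h0 : psiFun g.natDegree g (p - p') = 0 := (psi_eq_zero_iff hg).2 hd
  rw [map_sub, sub_eq_zero] at h0
  exact h0

lemma sum_ite_coe {n : ℕ} (b : Fin n) (F : Fin n → k) :
    ∑ l : Fin n, (if (l : ℕ) = (b : ℕ) then F l else 0) = F b := by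
  simp [Fin.val_eq_val, Finset.sum_ite_eq']

/-- The polynomial with given coefficient vector. -/
noncomputable def vecPoly {n : ℕ} (v : Fin n → k) : k[X] :=
  ∑ r : Fin n, monomial (r : ℕ) (v r)

lemma vecPoly_coeff {n : ℕ} (v : Fin n → k) (l : Fin n) :
    (vecPoly v).coeff (l : ℕ) = v l := by
  rw [vecPoly, Polynomial.finset_sum_coeff]
  simp only [Polynomial.coeff_monomial]
  exact sum_ite_coe l v

lemma vecPoly_natDegree_lt {n : ℕ} (hn : 1 ≤ n) (v : Fin n → k) :
    (vecPoly v).natDegree < n := by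
  have : (vecPoly v).natDegree ≤ n - 1 := by
    refine Polynomial.natDegree_sum_le_of_forall_le _ _ fun r _ => ?_
    refine (Polynomial.natDegree_monomial_le _).trans ?_
    omega
  omega

lemma psi_vecPoly {g : k[X]} (hg : g.Monic) (hg1 : 1 ≤ g.natDegree)
    (v : Fin g.natDegree → k) : psiFun g.natDegree g (vecPoly v) = v := by
  rw [psi_of_lt hg (vecPoly_natDegree_lt hg1 v)]
  funext l; exact vecPoly_coeff v l

lemma fin_sum_ite {n : ℕ} (c : ℕ) (hc : c < n) (F : Fin n → k) :
    ∑ l : Fin n, (if (l : ℕ) = c then F l else 0) = F ⟨c, hc⟩ := by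
  simp only [show ∀ l : Fin n, ((l:ℕ) = c) = (l = ⟨c, hc⟩) from
    fun l => by simp [Fin.ext_iff]]
  simp [Finset.sum_ite_eq']

lemma companion_mulVec_psi {g : k[X]} (hg : g.Monic) (hg1 : 1 ≤ g.natDegree) (p : k[X]) :
    companionMatrix g.natDegree g *ᵥ psiFun g.natDegree g p
      = psiFun g.natDegree g (X * p) := by
  set n := g.natDegree with hn
  set P := p %ₘ g with hP
  have hdegg : g.degree = (n : WithBot ℕ) := degree_eq_natDegree hg.ne_zero
  have hPn : ∀ m : ℕ, n ≤ m → P.coeff m = 0 := by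
    intro m hm
    refine coeff_eq_zero_of_degree_lt ?_
    exact lt_of_lt_of_le (lt_of_lt_of_eq (degree_modByMonic_lt p hg) hdegg)
      (by exact_mod_cast hm)
  set c := P.coeff (n - 1) with hc
  set R := X * P - C c * g with hR
  have hRcoeff : ∀ m : ℕ, n ≤ m → R.coeff m = 0 := by
    intro m hm
    have hm1 : m = (m - 1) + 1 := by omega
    have h1 : (X * P).coeff m = P.coeff (m - 1) := by
      conv_lhs => rw [hm1]
      rw [Polynomial.coeff_X_mul]
    rw [hR, Polynomial.coeff_sub, h1, Polynomial.coeff_C_mul]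
    have hgm : g.coeff m = if m = n then 1 else 0 := by
      rcases eq_or_lt_of_le hm with he | hlt
      · simp [← he]
        exact hg.coeff_natDegree
      · rw [if_neg (by omega)]
        exact coeff_eq_zero_of_natDegree_lt hlt
    have hPm : P.coeff (m - 1) = if m = n then c else 0 := by
      rcases eq_or_lt_of_le hm with he | hlt
      · rw [if_pos he.symm, hc, ← he]
      · rw [if_neg (by omega)]
        exact hPn (m - 1) (by omega)
    rw [hgm, hPm]
    split_ifs <;> ring
  have hRdeg : R.degree < g.degree := by
    rw [hdegg]
    exact (Polynomial.degree_lt_iff_coeff_zero _ _).2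
      (fun m hm => hRcoeff m (by exact_mod_cast hm))
  have hXp : (X * p) %ₘ g = R := by
    have hsum : X * p = (X * (p /ₘ g) + C c) * g + R := by
      conv_lhs => rw [← modByMonic_add_div p g]
      rw [hR, ← hP]
      ring
    rw [hsum, Polynomial.add_modByMonic,
      (Polynomial.modByMonic_eq_zero_iff_dvd hg).2 (Dvd.intro_left _ rfl), zero_add]
    exact (Polynomial.modByMonic_eq_self_iff hg).2 hRdeg
  funext r
  have hr := r.isLt
  have hent : ∀ l : Fin n, companionMatrix n g r l * psiFun n g p l
      = (if (l:ℕ) = n - 1 then -g.coeff (r:ℕ) * c else 0)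
        + (if (r:ℕ) = 0 then 0
            else if (l:ℕ) = (r:ℕ) - 1 then P.coeff ((r:ℕ) - 1) else 0) := by
    intro l
    have hl := l.isLt
    simp only [companionMatrix, Matrix.of_apply, psiFun_apply, ← hP]
    by_cases h1 : (l:ℕ) + 1 = n
    · have hln : (l:ℕ) = n - 1 := by omega
      rw [if_pos h1, if_pos hln]
      have hz : (if (r:ℕ) = 0 then (0:k)
          else if (l:ℕ) = (r:ℕ) - 1 then P.coeff ((r:ℕ) - 1) else 0) = 0 := by
        split_ifs with ha hb
        · rfl
        · exfalso; omega
        · rfl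
      rw [hz, add_zero, hln]
    · rw [if_neg h1]
      by_cases h2 : (r:ℕ) = (l:ℕ) + 1
      · rw [if_pos h2, if_neg (show ¬((l:ℕ) = n - 1) by omega), zero_add,
          if_neg (show ¬((r:ℕ) = 0) by omega),
          if_pos (show (l:ℕ) = (r:ℕ) - 1 by omega), one_mul,
          show (l:ℕ) = (r:ℕ) - 1 by omega]
      · rw [if_neg h2, zero_mul, if_neg (show ¬((l:ℕ) = n - 1) by omega), zero_add]
        split_ifs with ha hb
        · rfl
        · exfalso; omega
        · rfl
  calc (companionMatrix n g *ᵥ psiFun n g p) r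
      = ∑ l : Fin n, companionMatrix n g r l * psiFun n g p l := by
        simp [Matrix.mulVec, dotProduct]
    _ = ∑ l : Fin n, ((if (l:ℕ) = n - 1 then -g.coeff (r:ℕ) * c else 0)
          + (if (r:ℕ) = 0 then 0
              else if (l:ℕ) = (r:ℕ) - 1 then P.coeff ((r:ℕ) - 1) else 0)) :=
        Finset.sum_congr rfl (fun l _ => hent l)
    _ = -g.coeff (r:ℕ) * c + (if (r:ℕ) = 0 then 0 else P.coeff ((r:ℕ) - 1)) := by
        rw [Finset.sum_add_distrib, fin_sum_ite (n - 1) (by omega)]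
        congr 1
        by_cases h0 : (r:ℕ) = 0
        · simp [h0]
        · simp only [if_neg h0]
          rw [fin_sum_ite ((r:ℕ) - 1) (by omega)]
    _ = psiFun n g (X * p) r := by
        rw [psiFun_apply, hXp, hR, Polynomial.coeff_sub, Polynomial.coeff_C_mul]
        have hXPr : (X * P).coeff (r:ℕ)
            = if (r:ℕ) = 0 then 0 else P.coeff ((r:ℕ) - 1) := by
          by_cases h0 : (r:ℕ) = 0
          · rw [if_pos h0, h0]
            simp
          · rw [if_neg h0]
            conv_lhs => rw [show (r:ℕ) = ((r:ℕ) - 1) + 1 by omega]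
            rw [Polynomial.coeff_X_mul]
        rw [hXPr]
        ring

lemma companion_pow_mulVec_psi {g : k[X]} (hg : g.Monic) (hg1 : 1 ≤ g.natDegree)
    (t : ℕ) (p : k[X]) :
    (companionMatrix g.natDegree g ^ t) *ᵥ psiFun g.natDegree g p
      = psiFun g.natDegree g (X ^ t * p) := by
  induction t with
  | zero => simp
  | succ t ih =>
      rw [pow_succ', ← Matrix.mulVec_mulVec, ih, companion_mulVec_psi hg hg1,
        ← mul_assoc, ← pow_succ']

lemma aeval_companion_mulVec_psi {g : k[X]} (hg : g.Monic) (hg1 : 1 ≤ g.natDegree)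
    (lam p : k[X]) :
    (aeval (companionMatrix g.natDegree g) lam) *ᵥ psiFun g.natDegree g p
      = psiFun g.natDegree g (lam * p) := by
  induction lam using Polynomial.induction_on' with
  | add a b ha hb =>
      rw [map_add, Matrix.add_mulVec, ha, hb, add_mul, map_add]
  | monomial t a =>
      rw [aeval_monomial, show (monomial t a : k[X]) * p = a • (X ^ t * p) by
        rw [← Polynomial.C_mul_X_pow_eq_monomial, Polynomial.smul_eq_C_mul]; ring]
      rw [_root_.map_smul, ← companion_pow_mulVec_psi hg hg1 t p]
      rw [show (algebraMap k (Matrix (Fin g.natDegree) (Fin g.natDegree) k)) a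
            * companionMatrix g.natDegree g ^ t
          = a • (companionMatrix g.natDegree g ^ t) by
        rw [Algebra.smul_def]]
      rw [Matrix.smul_mulVec]

lemma sum_coeff_smul_psi {g : k[X]} (hg : g.Monic) {h : k[X]} (hh : h.Monic)
    (p : k[X]) :
    ∑ l : Fin h.natDegree, h.coeff (l : ℕ) • psiFun g.natDegree g (X ^ (l : ℕ) * p)
      = psiFun g.natDegree g (h * p) - psiFun g.natDegree g (X ^ h.natDegree * p) := by
  have key : ∑ l : Fin h.natDegree, h.coeff (l : ℕ) • (X ^ (l : ℕ) * p)
      = h * p - X ^ h.natDegree * p := by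
    have hsum : ∑ l : Fin h.natDegree, h.coeff (l : ℕ) • (X ^ (l : ℕ) * p)
        = (∑ l : Fin h.natDegree, C (h.coeff (l : ℕ)) * X ^ (l : ℕ)) * p := by
      rw [Finset.sum_mul]
      exact Finset.sum_congr rfl fun l _ => by
        rw [Polynomial.smul_eq_C_mul]; ring
    rw [hsum]
    have hh' : h = ∑ i ∈ Finset.range (h.natDegree + 1), monomial i (h.coeff i) :=
      Polynomial.as_sum_range' h (h.natDegree + 1) (Nat.lt_succ_self _)
    have hsplit : h = (∑ i ∈ Finset.range h.natDegree, monomial i (h.coeff i))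
        + X ^ h.natDegree := by
      conv_lhs => rw [hh']
      rw [Finset.sum_range_succ, hh.coeff_natDegree, Polynomial.X_pow_eq_monomial]
    have hS : (∑ l : Fin h.natDegree, C (h.coeff (l : ℕ)) * X ^ (l : ℕ))
        = h - X ^ h.natDegree := by
      rw [Fin.sum_univ_eq_sum_range (fun l => C (h.coeff l) * X ^ l),
        eq_sub_iff_add_eq]
      rw [Finset.sum_congr rfl fun i _ => Polynomial.C_mul_X_pow_eq_monomial]
      exact hsplit.symm
    rw [hS]; ring
  rw [← map_sub, ← key, map_sum]
  exact Finset.sum_congr rfl fun l _ => (_root_.map_smul _ _ _).symm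

lemma block_commute_iff {g h : k[X]} (hg : g.Monic) (hh : h.Monic)
    (hg1 : 1 ≤ g.natDegree) (hh1 : 1 ≤ h.natDegree) (q : k[X])
    (H1 : g ∣ h * q)
    (H2 : ∀ G : k[X], g ∣ h * G → ∃ lam : k[X], g ∣ G - lam * q)
    (Xm : Matrix (Fin g.natDegree) (Fin h.natDegree) k) :
    Xm * companionMatrix h.natDegree h = companionMatrix g.natDegree g * Xm ↔
    ∃ lam : k[X], ∀ (r : Fin g.natDegree) (s : Fin h.natDegree),
      Xm r s = psiFun g.natDegree g (lam * (X ^ (s : ℕ) * q)) r := by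
  have hmulpt : ∀ (v : Fin g.natDegree → k) (r : Fin g.natDegree),
      ∑ l, companionMatrix g.natDegree g r l * v l
        = (companionMatrix g.natDegree g *ᵥ v) r := fun v r => by
    simp [Matrix.mulVec, dotProduct]
  have hsumpt : ∀ (p : k[X]) (r : Fin g.natDegree),
      ∑ l : Fin h.natDegree, h.coeff (l:ℕ) * psiFun g.natDegree g (X ^ (l:ℕ) * p) r
        = psiFun g.natDegree g (h * p) r
          - psiFun g.natDegree g (X ^ h.natDegree * p) r := by
    intro p r
    have := congrFun (sum_coeff_smul_psi hg hh p) r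
    simpa [Finset.sum_apply, Pi.smul_apply, smul_eq_mul, Pi.sub_apply] using this
  have hstep : ∀ (p : k[X]) (r : Fin g.natDegree) (sv : ℕ),
      (companionMatrix g.natDegree g *ᵥ psiFun g.natDegree g (X ^ sv * p)) r
        = psiFun g.natDegree g (X ^ (sv + 1) * p) r := by
    intro p r sv
    rw [companion_mulVec_psi hg hg1, ← mul_assoc, ← pow_succ']
  constructor
  · intro hcomm
    have hE : ∀ (r : Fin g.natDegree) (s : Fin h.natDegree),
        ∑ l, Xm r l * companionMatrix h.natDegree h l s
          = ∑ l, companionMatrix g.natDegree g r l * Xm l s := by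
      intro r s
      rw [← Matrix.mul_apply, ← Matrix.mul_apply, hcomm]
    set G := vecPoly (fun r => Xm r ⟨0, hh1⟩) with hGdef
    have hcol : ∀ sv : ℕ, ∀ hs : sv < h.natDegree,
        (fun r => Xm r ⟨sv, hs⟩) = psiFun g.natDegree g (X ^ sv * G) := by
      intro sv
      induction sv with
      | zero => intro hs; rw [pow_zero, one_mul, hGdef, psi_vecPoly hg hg1]
      | succ sv ih =>
          intro hs
          have hs' : sv < h.natDegree := by omega
          funext r
          have hE' := hE r ⟨sv, hs'⟩
          have hCh : ∀ l : Fin h.natDegree,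
              companionMatrix h.natDegree h l ⟨sv, hs'⟩
                = if (l:ℕ) = sv + 1 then 1 else 0 := by
            intro l
            show (if sv + 1 = h.natDegree then -h.coeff (l:ℕ)
              else if (l:ℕ) = sv + 1 then 1 else 0) = _
            rw [if_neg (by omega)]
          have hterm : ∀ l : Fin h.natDegree,
              Xm r l * companionMatrix h.natDegree h l ⟨sv, hs'⟩
                = if (l:ℕ) = sv + 1 then Xm r l else 0 := by
            intro l; rw [hCh l, mul_ite, mul_one, mul_zero]
          rw [Finset.sum_congr rfl fun l _ => hterm l, fin_sum_ite (sv + 1) hs _]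
            at hE'
          rw [hE', hmulpt, ih hs', hstep]
    have hXm : ∀ (r : Fin g.natDegree) (s : Fin h.natDegree),
        Xm r s = psiFun g.natDegree g (X ^ (s:ℕ) * G) r := by
      intro r s
      have := congrFun (hcol (s:ℕ) s.isLt) r
      simpa using this
    have hdvdG : g ∣ h * G := by
      rw [← psi_eq_zero_iff hg]
      funext r
      have hE' := hE r ⟨h.natDegree - 1, by omega⟩
      have hCh : ∀ l : Fin h.natDegree,
          companionMatrix h.natDegree h l ⟨h.natDegree - 1, by omega⟩
            = -h.coeff (l:ℕ) := by
        intro l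
        show (if (h.natDegree - 1) + 1 = h.natDegree then -h.coeff (l:ℕ)
          else if (l:ℕ) = (h.natDegree - 1) + 1 then 1 else 0) = _
        rw [if_pos (by omega)]
      have hterm : ∀ l : Fin h.natDegree,
          Xm r l * companionMatrix h.natDegree h l ⟨h.natDegree - 1, by omega⟩
            = -(h.coeff (l:ℕ) * psiFun g.natDegree g (X ^ (l:ℕ) * G) r) := by
        intro l; rw [hCh l, hXm r l]; ring
      have hL : ∑ l, Xm r l * companionMatrix h.natDegree h l
            ⟨h.natDegree - 1, by omega⟩
          = -(psiFun g.natDegree g (h * G) r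
              - psiFun g.natDegree g (X ^ h.natDegree * G) r) := by
        rw [Finset.sum_congr rfl fun l _ => hterm l, Finset.sum_neg_distrib,
          hsumpt G r]
      have hR : ∑ l, companionMatrix g.natDegree g r l * Xm l
            ⟨h.natDegree - 1, by omega⟩
          = psiFun g.natDegree g (X ^ h.natDegree * G) r := by
        rw [hmulpt, hcol (h.natDegree - 1) (by omega), hstep,
          show h.natDegree - 1 + 1 = h.natDegree by omega]
      rw [hL, hR] at hE'
      have : psiFun g.natDegree g (h * G) r = 0 := by linear_combination -hE'
      simpa using this
    obtain ⟨lam, hlam⟩ := H2 G hdvdG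
    refine ⟨lam, fun r s => ?_⟩
    rw [hXm r s]
    refine congrFun (psi_congr hg ?_) r
    have heq : (X ^ (s:ℕ) * G) - lam * (X ^ (s:ℕ) * q)
        = X ^ (s:ℕ) * (G - lam * q) := by ring
    rw [heq]
    exact Dvd.dvd.mul_left hlam _
  · rintro ⟨lam, hXm⟩
    have hXm' : ∀ (r : Fin g.natDegree) (s : Fin h.natDegree),
        Xm r s = psiFun g.natDegree g (X ^ (s:ℕ) * (lam * q)) r := by
      intro r s; rw [hXm r s]; congr 2; ring
    have hps : g ∣ h * (lam * q) := by
      have heq : h * (lam * q) = lam * (h * q) := by ring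
      rw [heq]
      exact Dvd.dvd.mul_left H1 lam
    ext r s
    rw [Matrix.mul_apply, Matrix.mul_apply]
    have hR : ∑ l, companionMatrix g.natDegree g r l * Xm l s
        = psiFun g.natDegree g (X ^ ((s:ℕ) + 1) * (lam * q)) r := by
      calc ∑ l, companionMatrix g.natDegree g r l * Xm l s
          = ∑ l, companionMatrix g.natDegree g r l
              * psiFun g.natDegree g (X ^ (s:ℕ) * (lam * q)) l :=
            Finset.sum_congr rfl fun l _ => by rw [hXm' l s]
        _ = (companionMatrix g.natDegree g *ᵥ
              psiFun g.natDegree g (X ^ (s:ℕ) * (lam * q))) r := hmulpt _ r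
        _ = psiFun g.natDegree g (X ^ ((s:ℕ) + 1) * (lam * q)) r := hstep _ r _
    by_cases hs : (s:ℕ) + 1 = h.natDegree
    · have hCh : ∀ l : Fin h.natDegree,
          companionMatrix h.natDegree h l s = -h.coeff (l:ℕ) := by
        intro l
        show (if (s:ℕ) + 1 = h.natDegree then -h.coeff (l:ℕ)
          else if (l:ℕ) = (s:ℕ) + 1 then 1 else 0) = _
        rw [if_pos hs]
      have hz : psiFun g.natDegree g (h * (lam * q)) r = 0 := by
        rw [(psi_eq_zero_iff hg).2 hps]; rfl
      have hterm : ∀ l : Fin h.natDegree,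
          Xm r l * companionMatrix h.natDegree h l s
            = -(h.coeff (l:ℕ)
                * psiFun g.natDegree g (X ^ (l:ℕ) * (lam * q)) r) := by
        intro l; rw [hCh l, hXm' r l]; ring
      rw [Finset.sum_congr rfl fun l _ => hterm l, Finset.sum_neg_distrib,
        hsumpt (lam * q) r, hz, hR, hs]
      ring
    · have hs1 : (s:ℕ) + 1 < h.natDegree := by
        have := s.isLt; omega
      have hCh : ∀ l : Fin h.natDegree,
          companionMatrix h.natDegree h l s
            = if (l:ℕ) = (s:ℕ) + 1 then 1 else 0 := by
        intro l
        show (if (s:ℕ) + 1 = h.natDegree then -h.coeff (l:ℕ)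
          else if (l:ℕ) = (s:ℕ) + 1 then 1 else 0) = _
        rw [if_neg hs]
      have hterm : ∀ l : Fin h.natDegree,
          Xm r l * companionMatrix h.natDegree h l s
            = if (l:ℕ) = (s:ℕ) + 1 then Xm r l else 0 := by
        intro l; rw [hCh l, mul_ite, mul_one, mul_zero]
      rw [Finset.sum_congr rfl fun l _ => hterm l, fin_sum_ite ((s:ℕ) + 1) hs1 _,
        hR]
      exact hXm' r ⟨(s:ℕ) + 1, hs1⟩

lemma commute_blockDiagonal'_iff {m : ℕ} {nd : Fin m → ℕ}
    (M : ∀ i, Matrix (Fin (nd i)) (Fin (nd i)) k)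
    (B : Matrix (Σ i : Fin m, Fin (nd i)) (Σ i : Fin m, Fin (nd i)) k) :
    B * blockDiagonal' M = blockDiagonal' M * B ↔
    ∀ i j, (Matrix.of fun r s => B ⟨i, r⟩ ⟨j, s⟩) * M j
      = M i * (Matrix.of fun r s => B ⟨i, r⟩ ⟨j, s⟩) := by
  have hBA : ∀ (i j : Fin m) (r : Fin (nd i)) (s : Fin (nd j)),
      (B * blockDiagonal' M) ⟨i, r⟩ ⟨j, s⟩
        = ∑ s', B ⟨i, r⟩ ⟨j, s'⟩ * M j s' s := by
    intro i j r s
    rw [Matrix.mul_apply, ← Finset.univ_sigma_univ, Finset.sum_sigma]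
    rw [Finset.sum_eq_single j]
    · exact Finset.sum_congr rfl fun s' _ => by
        rw [Matrix.blockDiagonal'_apply_eq]
    · intro j' _ hne
      refine Finset.sum_eq_zero fun s' _ => ?_
      rw [Matrix.blockDiagonal'_apply_ne M _ _ hne, mul_zero]
    · intro hj; exact absurd (Finset.mem_univ j) hj
  have hAB : ∀ (i j : Fin m) (r : Fin (nd i)) (s : Fin (nd j)),
      (blockDiagonal' M * B) ⟨i, r⟩ ⟨j, s⟩
        = ∑ r', M i r r' * B ⟨i, r'⟩ ⟨j, s⟩ := by
    intro i j r s
    rw [Matrix.mul_apply, ← Finset.univ_sigma_univ, Finset.sum_sigma]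
    rw [Finset.sum_eq_single i]
    · exact Finset.sum_congr rfl fun r' _ => by
        rw [Matrix.blockDiagonal'_apply_eq]
    · intro i' _ hne
      refine Finset.sum_eq_zero fun r' _ => ?_
      rw [Matrix.blockDiagonal'_apply_ne M _ _ (Ne.symm hne), zero_mul]
    · intro hi; exact absurd (Finset.mem_univ i) hi
  constructor
  · intro hcomm i j
    ext r s
    have h := congrFun (congrFun hcomm ⟨i, r⟩) ⟨j, s⟩
    rw [hBA, hAB] at h
    simpa [Matrix.mul_apply] using h
  · intro hblk
    ext ⟨i, r⟩ ⟨j, s⟩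
    rw [hBA, hAB]
    have h := congrFun (congrFun (hblk i j) r) s
    simpa [Matrix.mul_apply] using h

end Aux

/-- The generating polynomial `q_{ij}`: equal to `f_i / f_j` when `i > j` and to `1`
when `i ≤ j`. -/
noncomputable def genPoly {k : Type*} [Field k] {m : ℕ} (f : Fin m → k[X]) (i j : Fin m) :
    k[X] :=
  if j < i then f i /ₘ f j else 1

/-- The generating matrix `Q_{ij}`: its `t`-th column is `C(f_i)^(t-1) q_{ij}`, where
`q_{ij} ∈ k^{n_i}` is the coefficient vector of the generating polynomial `q_{ij}`. -/
noncomputable def genMatrix {k : Type*} [Field k] {m : ℕ} (f : Fin m → k[X]) (i j : Fin m) :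
    Matrix (Fin (f i).natDegree) (Fin (f j).natDegree) k :=
  Matrix.of fun r t =>
    ((companionMatrix (f i).natDegree (f i) ^ (t : ℕ)) *ᵥ
      fun l : Fin (f i).natDegree => (genPoly f i j).coeff l) r

/-- **Centralizer of a matrix in rational canonical form.**
Let `f 0 ∣ f 1 ∣ ⋯ ∣ f (m-1)` be nonzero monic polynomials of degrees `≥ 1` and let
`A = C(f 0) ⊕ ⋯ ⊕ C(f (m-1))` be the block diagonal matrix of companion matrices.
Then `B` commutes with `A` iff each block `B_{ij}` of `B` equals `λ_{ij}(C(f_i)) Q_{ij}`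
for some polynomial `λ_{ij}`. -/
theorem commutes_blockDiagonal_companion_iff {k : Type*} [Field k] {m : ℕ}
    (f : Fin m → k[X]) (hmonic : ∀ i, (f i).Monic) (hne : ∀ i, f i ≠ 0)
    (hdeg : ∀ i, 1 ≤ (f i).natDegree) (hdvd : ∀ i j : Fin m, i ≤ j → f i ∣ f j)
    (B : Matrix (Σ i : Fin m, Fin (f i).natDegree) (Σ i : Fin m, Fin (f i).natDegree) k) :
    B * Matrix.blockDiagonal' (fun i => companionMatrix (f i).natDegree (f i)) =
      Matrix.blockDiagonal' (fun i => companionMatrix (f i).natDegree (f i)) * B ↔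
    ∀ i j : Fin m, ∃ lam : k[X],
      ∀ (r : Fin (f i).natDegree) (s : Fin (f j).natDegree),
        B ⟨i, r⟩ ⟨j, s⟩ =
          (Polynomial.aeval (companionMatrix (f i).natDegree (f i)) lam * genMatrix f i j)
            r s := by
  rw [commute_blockDiagonal'_iff]
  refine forall₂_congr fun i j => ?_
  -- per-pair data
  have hfact : ∀ {a b : Fin m}, b < a → f a = f b * (f a /ₘ f b) := by
    intro a b hba
    have hd := hdvd b a (le_of_lt hba)
    have hma := modByMonic_add_div (f a) (f b)
    rw [(modByMonic_eq_zero_iff_dvd (hmonic b)).2 hd, zero_add] at hma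
    exact hma.symm
  have hqdeg : (genPoly f i j).natDegree < (f i).natDegree := by
    rw [genPoly]
    split_ifs with hij
    · rw [natDegree_divByMonic (f i) (hmonic j)]
      have h1 := hdeg i; have h2 := hdeg j
      have h3 : (f j).natDegree ≤ (f i).natDegree :=
        natDegree_le_natDegree (Polynomial.degree_le_of_dvd
          (hdvd j i (le_of_lt hij)) (hne i))
      omega
    · rw [natDegree_one]; exact hdeg i
  have H1 : f i ∣ f j * genPoly f i j := by
    rw [genPoly]
    split_ifs with hij
    · rw [← hfact hij]
    · rw [mul_one]; exact hdvd i j (not_lt.1 hij)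
  have H2 : ∀ G : k[X], f i ∣ f j * G → ∃ lam : k[X], f i ∣ G - lam * genPoly f i j := by
    intro G hG
    by_cases hij : j < i
    · rw [genPoly, if_pos hij]
      rw [hfact hij, mul_dvd_mul_iff_left (hne j)] at hG
      obtain ⟨c, hc⟩ := hG
      refine ⟨c, ?_⟩
      rw [hc, show f i /ₘ f j * c - c * (f i /ₘ f j) = 0 by ring]
      exact dvd_zero _
    · rw [genPoly, if_neg hij]
      exact ⟨G, by simp⟩
  rw [show (Matrix.of fun r s => B ⟨i, r⟩ ⟨j, s⟩) = (Matrix.of fun r s => B ⟨i, r⟩ ⟨j, s⟩)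
    from rfl]
  rw [block_commute_iff (hmonic i) (hmonic j) (hdeg i) (hdeg j) (genPoly f i j) H1 H2]
  refine exists_congr fun lam => forall₂_congr fun r s => ?_
  have hcolQ : (fun l => genMatrix f i j l s)
      = psiFun (f i).natDegree (f i) (X ^ (s:ℕ) * genPoly f i j) := by
    funext l
    show ((companionMatrix (f i).natDegree (f i) ^ (s:ℕ)) *ᵥ
        fun l' : Fin (f i).natDegree => (genPoly f i j).coeff (l':ℕ)) l = _
    rw [show (fun l' : Fin (f i).natDegree => (genPoly f i j).coeff (l':ℕ))
        = psiFun (f i).natDegree (f i) (genPoly f i j) from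
      (psi_of_lt (hmonic i) hqdeg).symm]
    rw [companion_pow_mulVec_psi (hmonic i) (hdeg i)]
  have hgen : (aeval (companionMatrix (f i).natDegree (f i)) lam * genMatrix f i j) r s
      = psiFun (f i).natDegree (f i) (lam * (X ^ (s:ℕ) * genPoly f i j)) r := by
    calc (aeval (companionMatrix (f i).natDegree (f i)) lam * genMatrix f i j) r s
        = (aeval (companionMatrix (f i).natDegree (f i)) lam *ᵥ
            (fun l => genMatrix f i j l s)) r := by
          rw [Matrix.mul_apply]
          simp [Matrix.mulVec, dotProduct]
      _ = _ := by
          rw [hcolQ, aeval_companion_mulVec_psi (hmonic i) (hdeg i)]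
  rw [hgen]
  exact Iff.rfl
end
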